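/- Let (G, π₁) and (G, π₂) be permutation groups on the same finite group G, with induced matrix representations Π₁, Π₂ and permutation polytopes P(Π₁), P(Π₂). If (G, π₁) and (G, π₂) are effectively equivalent, then there is an affine isomorphism Φ : aff(P(Π₁)) → aff(P(Π₂)) which maps P(Π₁) onto P(Π₂) and whose restriction to the set Π₁(G) of permutation matrices is a group homomorphism onto Π₂(G) (i.e. Φ(M_{π₁(g)} M_{π₁(h)}) = Φ(M_{π₁(g)}) Φ(M_{π₁(h)}) for all g, h ∈ G). -/

import Mathlib

open Finset

/-- The permutation matrix of `σ`: `(M_σ)_{ij} = 1` if `i = σ j` and `0` otherwise. -/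
def permMat (n : ℕ) (σ : Equiv.Perm (Fin n)) : Matrix (Fin n) (Fin n) ℝ :=
  Matrix.of fun i j => if i = σ j then 1 else 0

lemma permMat_one (n : ℕ) : permMat n 1 = 1 := by
  ext i j; simp [permMat, Matrix.one_apply]; congr

lemma permMat_mul (n : ℕ) (σ τ : Equiv.Perm (Fin n)) :
    permMat n (σ * τ) = permMat n σ * permMat n τ := by
  ext i j
  simp only [permMat, Matrix.mul_apply, Matrix.of_apply, Equiv.Perm.mul_apply]
  rw [Finset.sum_eq_single (τ j)]
  · simp; congr
  · intro k _ hk; simp [hk]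
  · simp

/-- The matrix representation `Π : G → GL_n(ℝ)`, `g ↦ M_{π(g)}`, acting on `ℝⁿ`. -/
noncomputable def permRep (n : ℕ) {G : Type} [Group G] (π : G →* Equiv.Perm (Fin n)) :
    Representation ℝ G (Fin n → ℝ) where
  toFun g := (permMat n (π g)).mulVecLin
  map_one' := by simp [permMat_one]; rfl
  map_mul' g h := by simp [permMat_mul]; rfl

variable {G : Type} [Group G] [Fintype G]

/-- The affine kernel `ker°ρ` of a real representation `ρ` of `G`. -/
def affKer {V : Type} [AddCommGroup V] [Module ℝ V]
    (ρ : Representation ℝ G V) : Set (G → ℝ) :=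
  {l | (∑ g : G, l g • (ρ g : V →ₗ[ℝ] V)) = 0 ∧ (∑ g : G, l g) = 0}

/-- Direct sum (realized on the product space) of two representations. -/
def prodRep {V W : Type} [AddCommGroup V] [Module ℝ V] [AddCommGroup W] [Module ℝ W]
    (ρ : Representation ℝ G V) (σ : Representation ℝ G W) :
    Representation ℝ G (V × W) where
  toFun g := (ρ g).prodMap (σ g)
  map_one' := by ext <;> simp
  map_mul' g h := by ext <;> simp

/-- Isomorphism of `G`-representations. -/
def RepIso {V W : Type} [AddCommGroup V] [Module ℝ V] [AddCommGroup W] [Module ℝ W]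
    (ρ : Representation ℝ G V) (σ : Representation ℝ G W) : Prop :=
  ∃ e : V ≃ₗ[ℝ] W, ∀ (g : G) (v : V), e (ρ g v) = σ g (e v)

/-- Stable equivalence of real representations. -/
def StablyEquivalent {V W : Type} [AddCommGroup V] [Module ℝ V] [AddCommGroup W] [Module ℝ W]
    (ρ₁ : Representation ℝ G V) (ρ₂ : Representation ℝ G W) : Prop :=
  ∃ (V' : Type) (_ : AddCommGroup V') (_ : Module ℝ V') (ρ₁' : Representation ℝ G V')
    (W' : Type) (_ : AddCommGroup W') (_ : Module ℝ W') (ρ₂' : Representation ℝ G W'),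
    affKer ρ₁ ⊆ affKer ρ₁' ∧ affKer ρ₂ ⊆ affKer ρ₂' ∧
    RepIso (prodRep ρ₁ ρ₁') (prodRep ρ₂ ρ₂')

/- ### Auxiliary lemmas -/

lemma exists_linear_factor {V W₁ W₂ : Type} [AddCommGroup V] [Module ℝ V]
    [AddCommGroup W₁] [Module ℝ W₁] [AddCommGroup W₂] [Module ℝ W₂]
    (f : V →ₗ[ℝ] W₁) (g : V →ₗ[ℝ] W₂) (h : LinearMap.ker f ≤ LinearMap.ker g) :
    ∃ h' : W₁ →ₗ[ℝ] W₂, ∀ v, h' (f v) = g v := by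
  obtain ⟨C, hC⟩ := Submodule.exists_isCompl (LinearMap.range f)
  let p := (LinearMap.range f).linearProjOfIsCompl C hC
  let q := (f.quotKerEquivRange).symm.toLinearMap
  let g' := (LinearMap.ker f).liftQ g h
  refine ⟨g' ∘ₗ q ∘ₗ p, fun v => ?_⟩
  have h1 : p (f v) = ⟨f v, LinearMap.mem_range_self f v⟩ :=
    Submodule.linearProjOfIsCompl_apply_left hC ⟨f v, LinearMap.mem_range_self f v⟩
  have h2 : f.quotKerEquivRange.symm ⟨f v, LinearMap.mem_range_self f v⟩
      = (LinearMap.ker f).mkQ v := f.quotKerEquivRange_symm_apply_image v _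
  simp only [LinearMap.comp_apply, h1, q, g', LinearEquiv.coe_coe, h2,
    Submodule.mkQ_apply, Submodule.liftQ_apply]

lemma exists_affine_of_H {ι M₁ M₂ : Type} [Fintype ι] [DecidableEq ι]
    [AddCommGroup M₁] [Module ℝ M₁] [AddCommGroup M₂] [Module ℝ M₂]
    (v : ι → M₁) (w : ι → M₂)
    (H : ∀ l : ι → ℝ, (∑ i, l i) = 0 → (∑ i, l i • v i) = 0 → (∑ i, l i • w i) = 0) :
    ∃ f : M₁ →ᵃ[ℝ] M₂, ∀ i, f (v i) = w i := by
  let A : (ι → ℝ) →ₗ[ℝ] M₁ × ℝ :=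
    (Fintype.linearCombination ℝ v).prod (Fintype.linearCombination ℝ fun _ => (1:ℝ))
  let B : (ι → ℝ) →ₗ[ℝ] M₂ × ℝ :=
    (Fintype.linearCombination ℝ w).prod (Fintype.linearCombination ℝ fun _ => (1:ℝ))
  have hker : LinearMap.ker A ≤ LinearMap.ker B := by
    intro l hl
    simp only [LinearMap.mem_ker, LinearMap.prod_apply, Prod.mk_eq_zero, Function.prod_apply,
      Fintype.linearCombination_apply, A, B, smul_eq_mul, mul_one] at hl ⊢
    exact ⟨H l hl.2 hl.1, hl.2⟩
  obtain ⟨S, hS⟩ := exists_linear_factor A B hker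
  refine ⟨⟨fun x => (S (x, 1)).1, (LinearMap.fst ℝ M₂ ℝ) ∘ₗ S ∘ₗ (LinearMap.inl ℝ M₁ ℝ),
    fun p x => ?_⟩, fun i => ?_⟩
  · show (S (x +ᵥ p, 1)).1 = (S (x, 0)).1 +ᵥ (S (p, 1)).1
    have : ((x +ᵥ p : M₁), (1:ℝ)) = (x, 0) + (p, 1) := by
      simp [Prod.ext_iff]
    rw [this, map_add]; rfl
  · have hA : A (Pi.single i 1) = (v i, 1) := by
      simp only [LinearMap.prod_apply, Function.prod_apply, A, Fintype.linearCombination_apply_single,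
        one_smul, smul_eq_mul, mul_one]
    have hB : B (Pi.single i 1) = (w i, 1) := by
      simp only [LinearMap.prod_apply, Function.prod_apply, B, Fintype.linearCombination_apply_single,
        one_smul, smul_eq_mul, mul_one]
    show (S (v i, 1)).1 = w i
    rw [← hA, hS, hB]

lemma affKer_prodRep {V W : Type} [AddCommGroup V] [Module ℝ V] [AddCommGroup W] [Module ℝ W]
    (ρ : Representation ℝ G V) (σ : Representation ℝ G W) :
    affKer (prodRep ρ σ) = affKer ρ ∩ affKer σ := by
  ext l
  have key : ∀ x : V × W, (∑ g : G, l g • ((prodRep ρ σ) g : V × W →ₗ[ℝ] V × W)) x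
      = ((∑ g : G, l g • (ρ g : V →ₗ[ℝ] V)) x.1, (∑ g : G, l g • (σ g : W →ₗ[ℝ] W)) x.2) := by
    intro x
    simp [prodRep, LinearMap.sum_apply, Prod.ext_iff, Prod.fst_sum, Prod.snd_sum]
  constructor
  · rintro ⟨h1, h2⟩
    refine ⟨⟨?_, h2⟩, ⟨?_, h2⟩⟩
    · ext v
      have := key (v, 0)
      rw [h1] at this
      simpa using congrArg Prod.fst this.symm
    · ext w
      have := key (0, w)
      rw [h1] at this
      simpa using congrArg Prod.snd this.symm
  · rintro ⟨⟨h1, h2⟩, ⟨h3, _⟩⟩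
    refine ⟨?_, h2⟩
    apply LinearMap.ext; intro x
    rw [key x, h1, h3]
    rfl

lemma affKer_eq_of_repIso {V W : Type} [AddCommGroup V] [Module ℝ V] [AddCommGroup W] [Module ℝ W]
    {ρ : Representation ℝ G V} {σ : Representation ℝ G W} (h : RepIso ρ σ) :
    affKer ρ = affKer σ := by
  obtain ⟨e, he⟩ := h
  have main : ∀ l : G → ℝ, (∑ g : G, l g • (ρ g : V →ₗ[ℝ] V)) = 0 →
      (∑ g : G, l g • (σ g : W →ₗ[ℝ] W)) = 0 := by
    intro l hl
    ext w
    have : (∑ g : G, l g • (σ g : W →ₗ[ℝ] W)) w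
        = e ((∑ g : G, l g • (ρ g : V →ₗ[ℝ] V)) (e.symm w)) := by
      simp only [LinearMap.sum_apply, LinearMap.smul_apply, map_sum, map_smul]
      refine Finset.sum_congr rfl fun g _ => ?_
      rw [he g (e.symm w), e.apply_symm_apply]
    rw [this, hl]
    simp
  have he' : ∀ (g : G) (w : W), e.symm (σ g w) = ρ g (e.symm w) := by
    intro g w
    apply e.injective
    rw [e.apply_symm_apply, he g (e.symm w), e.apply_symm_apply]
  have main' : ∀ l : G → ℝ, (∑ g : G, l g • (σ g : W →ₗ[ℝ] W)) = 0 →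
      (∑ g : G, l g • (ρ g : V →ₗ[ℝ] V)) = 0 := by
    intro l hl
    ext v
    have : (∑ g : G, l g • (ρ g : V →ₗ[ℝ] V)) v
        = e.symm ((∑ g : G, l g • (σ g : W →ₗ[ℝ] W)) (e v)) := by
      simp only [LinearMap.sum_apply, LinearMap.smul_apply, map_sum, map_smul]
      refine Finset.sum_congr rfl fun g _ => ?_
      rw [he' g (e v), e.symm_apply_apply]
    rw [this, hl]
    simp
  ext l
  exact ⟨fun ⟨h1, h2⟩ => ⟨main l h1, h2⟩, fun ⟨h1, h2⟩ => ⟨main' l h1, h2⟩⟩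

/-- `Matrix.mulVecLin` as a bundled linear map. -/
def mulVecLinHom (n : ℕ) : Matrix (Fin n) (Fin n) ℝ →ₗ[ℝ] ((Fin n → ℝ) →ₗ[ℝ] (Fin n → ℝ)) where
  toFun := Matrix.mulVecLin
  map_add' := Matrix.mulVecLin_add
  map_smul' c M := by ext x; simp [Matrix.smul_mulVec]

lemma mulVecLin_eq_zero_iff {n : ℕ} (N : Matrix (Fin n) (Fin n) ℝ) :
    N.mulVecLin = 0 ↔ N = 0 := by
  constructor
  · intro h
    ext i j
    have := LinearMap.congr_fun h (Pi.single j 1)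
    rw [Matrix.mulVecLin_apply, Matrix.mulVec_single] at this
    simpa using congrFun this i
  · rintro rfl; exact Matrix.mulVecLin_zero

lemma affKer_char {n : ℕ} (M : G → Matrix (Fin n) (Fin n) ℝ)
    (ρ : Representation ℝ G (Fin n → ℝ))
    (hρ : ∀ g, (ρ g : (Fin n → ℝ) →ₗ[ℝ] (Fin n → ℝ)) = (M g).mulVecLin) (l : G → ℝ) :
    l ∈ affKer ρ ↔ ((∑ g, l g • M g) = 0 ∧ (∑ g, l g) = 0) := by
  have hsum : (∑ g : G, l g • (ρ g : (Fin n → ℝ) →ₗ[ℝ] (Fin n → ℝ)))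
      = (∑ g : G, l g • M g).mulVecLin := by
    simp_rw [hρ]
    rw [show (∑ g : G, l g • M g).mulVecLin = mulVecLinHom n (∑ g : G, l g • M g) from rfl,
      map_sum]
    refine Finset.sum_congr rfl fun g _ => ?_
    rw [map_smul]
    rfl
  unfold affKer
  rw [Set.mem_setOf_eq, hsum, mulVecLin_eq_zero_iff]

/-- (a) ⇒ (d) of the characterization theorem. If `(G, π₁)` and
`(G, π₂)` are effectively equivalent, then there is an affine isomorphism
`Φ : aff(P(Π₁)) → aff(P(Π₂))` mapping `P(Π₁)` onto `P(Π₂)` whose restriction to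
`Π₁(G)` is a group homomorphism onto `Π₂(G)`. -/
theorem effectivelyEquivalent_implies_affine_iso_multiplicative_on_vertices
    {n₁ n₂ : ℕ} (π₁ : G →* Equiv.Perm (Fin n₁)) (π₂ : G →* Equiv.Perm (Fin n₂))
    (hπ₁ : Function.Injective π₁) (hπ₂ : Function.Injective π₂)
    (heff : ∃ φ : G ≃* G,
      StablyEquivalent (permRep n₁ π₁) ((permRep n₂ π₂).comp φ.toMonoidHom)) :
    ∃ (f : Matrix (Fin n₁) (Fin n₁) ℝ →ᵃ[ℝ] Matrix (Fin n₂) (Fin n₂) ℝ)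
      (f' : Matrix (Fin n₂) (Fin n₂) ℝ →ᵃ[ℝ] Matrix (Fin n₁) (Fin n₁) ℝ),
      f '' (convexHull ℝ (Set.range fun g : G => permMat n₁ (π₁ g)))
        = convexHull ℝ (Set.range fun g : G => permMat n₂ (π₂ g)) ∧
      (∀ x ∈ affineSpan ℝ (convexHull ℝ (Set.range fun g : G => permMat n₁ (π₁ g))),
        f' (f x) = x) ∧
      (∀ y ∈ affineSpan ℝ (convexHull ℝ (Set.range fun g : G => permMat n₂ (π₂ g))),
        f (f' y) = y) ∧
      (f '' (Set.range fun g : G => permMat n₁ (π₁ g))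
        = Set.range fun g : G => permMat n₂ (π₂ g)) ∧
      (∀ a b : G,
        f (permMat n₁ (π₁ a) * permMat n₁ (π₁ b))
          = f (permMat n₁ (π₁ a)) * f (permMat n₁ (π₁ b))) := by
  classical
  obtain ⟨φ, V', _, _, ρ₁', W', _, _, ρ₂', h₁, h₂, hiso⟩ := heff
  set v : G → Matrix (Fin n₁) (Fin n₁) ℝ := fun g => permMat n₁ (π₁ g) with hv
  set w : G → Matrix (Fin n₂) (Fin n₂) ℝ := fun g => permMat n₂ (π₂ (φ g)) with hw
  set w₀ : G → Matrix (Fin n₂) (Fin n₂) ℝ := fun g => permMat n₂ (π₂ g) with hw₀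
  -- the two affine kernels coincide
  have hkereq : affKer (permRep n₁ π₁) = affKer ((permRep n₂ π₂).comp φ.toMonoidHom) := by
    have e1 : affKer (permRep n₁ π₁) = affKer (prodRep (permRep n₁ π₁) ρ₁') := by
      rw [affKer_prodRep]; exact (Set.inter_eq_left.mpr h₁).symm
    have e2 : affKer ((permRep n₂ π₂).comp φ.toMonoidHom)
        = affKer (prodRep ((permRep n₂ π₂).comp φ.toMonoidHom) ρ₂') := by
      rw [affKer_prodRep]; exact (Set.inter_eq_left.mpr h₂).symm
    rw [e1, e2, affKer_eq_of_repIso hiso]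
  have hch₁ : ∀ l : G → ℝ, l ∈ affKer (permRep n₁ π₁)
      ↔ ((∑ g, l g • v g) = 0 ∧ (∑ g, l g) = 0) :=
    affKer_char v (permRep n₁ π₁) (fun g => rfl)
  have hch₂ : ∀ l : G → ℝ, l ∈ affKer ((permRep n₂ π₂).comp φ.toMonoidHom)
      ↔ ((∑ g, l g • w g) = 0 ∧ (∑ g, l g) = 0) :=
    affKer_char w ((permRep n₂ π₂).comp φ.toMonoidHom) (fun g => rfl)
  have H₁ : ∀ l : G → ℝ, (∑ g, l g) = 0 → (∑ g, l g • v g) = 0 → (∑ g, l g • w g) = 0 := by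
    intro l hs hv0
    exact ((hch₂ l).mp (hkereq ▸ (hch₁ l).mpr ⟨hv0, hs⟩)).1
  have H₂ : ∀ l : G → ℝ, (∑ g, l g) = 0 → (∑ g, l g • w g) = 0 → (∑ g, l g • v g) = 0 := by
    intro l hs hw0
    exact ((hch₁ l).mp (hkereq ▸ (hch₂ l).mpr ⟨hw0, hs⟩)).1
  obtain ⟨f, hf⟩ := exists_affine_of_H v w H₁
  obtain ⟨f', hf'⟩ := exists_affine_of_H w v H₂
  -- image of vertex set
  have hrange : Set.range w = Set.range w₀ := by
    have : w = w₀ ∘ ⇑φ := rfl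
    rw [this, Set.range_comp, φ.surjective.range_eq, Set.image_univ]
  have hfimg : f '' Set.range v = Set.range w₀ := by
    rw [← Set.range_comp, show (⇑f ∘ v) = w from funext hf, hrange]
  have hfimg' : f' '' Set.range w₀ = Set.range v := by
    rw [← hrange, ← Set.range_comp, show (⇑f' ∘ w) = v from funext hf']
  -- inverse on affine span
  have key₁ : ∀ x ∈ affineSpan ℝ (Set.range v), f' (f x) = x := by
    intro x hx
    refine affineSpan_induction (p := fun z => f' (f z) = z) hx ?_ ?_
    · rintro y ⟨g, rfl⟩
      rw [hf g, hf' g]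
    · intro c u p q hu hp hq
      have : (f'.comp f) (c • (u -ᵥ p) +ᵥ q)
          = c • ((f'.comp f) u -ᵥ (f'.comp f) p) +ᵥ (f'.comp f) q := by
        rw [AffineMap.map_vadd, LinearMap.map_smul, AffineMap.linearMap_vsub]
      simp only [AffineMap.comp_apply] at this
      rw [this, hu, hp, hq]
  have key₂ : ∀ y ∈ affineSpan ℝ (Set.range w₀), f (f' y) = y := by
    intro y hy
    refine affineSpan_induction (p := fun z => f (f' z) = z) hy ?_ ?_
    · rintro z ⟨g, rfl⟩
      obtain ⟨g', rfl⟩ : ∃ g', φ g' = g := φ.surjective g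
      show f (f' (w g')) = w g'
      rw [hf' g', hf g']
    · intro c u p q hu hp hq
      have : (f.comp f') (c • (u -ᵥ p) +ᵥ q)
          = c • ((f.comp f') u -ᵥ (f.comp f') p) +ᵥ (f.comp f') q := by
        rw [AffineMap.map_vadd, LinearMap.map_smul, AffineMap.linearMap_vsub]
      simp only [AffineMap.comp_apply] at this
      rw [this, hu, hp, hq]
  refine ⟨f, f', ?_, ?_, ?_, hfimg, ?_⟩
  · rw [AffineMap.image_convexHull, hfimg]
  · intro x hx
    rw [affineSpan_convexHull] at hx
    exact key₁ x hx
  · intro y hy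
    rw [affineSpan_convexHull] at hy
    exact key₂ y hy
  · intro a b
    have hab : permMat n₁ (π₁ a) * permMat n₁ (π₁ b) = v (a * b) := by
      rw [hv]; simp only [map_mul, permMat_mul]
    rw [hab, hf (a * b), hf a, hf b, hw]
    simp only [map_mul, permMat_mul]
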